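/- arXiv:1110.0285 — 11 statements merged into one kernel-verified Lean document; each statement's English description precedes it below -/
import Mathlib

section
/- If σ ≠ 0 satisfies 2σ²(σ/α + λ) = |f|² and x = f/σ, then Π(x) = Π^d(σ), i.e., the primal and dual functions agree at corresponding critical points; in fact both equal −3σ²/(2α) − 2σλ. -/
open RealInnerProductSpace

/-- If `σ ≠ 0` satisfies `2σ²(σ/α + λ) = ‖f‖²` and `x = f/σ`, then
`Π(x) = Π^d(σ) = −3σ²/(2α) − 2σλ`. -/
theorem stmt_2 (n : ℕ) (α lam : ℝ) (hα : 0 < α) (hlam : 0 < lam)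
    (f : EuclideanSpace ℝ (Fin n)) (hf : f ≠ 0)
    (σ : ℝ) (hσ : σ ≠ 0) (hroot : 2 * σ ^ 2 * (σ / α + lam) = ‖f‖ ^ 2) :
    α / 2 * (‖σ⁻¹ • f‖ ^ 2 / 2 - lam) ^ 2 - ⟪σ⁻¹ • f, f⟫
      = -‖f‖ ^ 2 / (2 * σ) - σ ^ 2 / (2 * α) - σ * lam ∧
    -‖f‖ ^ 2 / (2 * σ) - σ ^ 2 / (2 * α) - σ * lam
      = -3 * σ ^ 2 / (2 * α) - 2 * σ * lam := by
  have h1 : ‖σ⁻¹ • f‖ ^ 2 = σ⁻¹ ^ 2 * ‖f‖ ^ 2 := by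
    rw [norm_smul]; simp [mul_pow, abs_sq]
  have h2 : ⟪σ⁻¹ • f, f⟫ = σ⁻¹ * ‖f‖ ^ 2 := by
    rw [real_inner_smul_left, real_inner_self_eq_norm_sq]
  rw [h1, h2, ← hroot]
  constructor <;> field_simp <;> ring
end

section
/- If 0 < |f|² < 8α²λ³/27, then the cubic 2σ²(σ/α + λ) = |f|² has exactly three distinct real roots σ₁, σ₂, σ₃ satisfying σ₁ > 0 > σ₂ > −2αλ/3 > σ₃ > −αλ. -/
lemma quad_rel (s k a b : ℝ) (ha : a ^ 3 + s * a ^ 2 = k) (hb : b ^ 3 + s * b ^ 2 = k)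
    (hab : a ≠ b) : a ^ 2 + a * b + b ^ 2 + s * (a + b) = 0 := by
  have h : (a - b) * (a ^ 2 + a * b + b ^ 2 + s * (a + b)) = 0 := by
    linear_combination ha - hb
  rcases mul_eq_zero.1 h with h | h
  · exact absurd (sub_eq_zero.1 h) hab
  · exact h

lemma sum_rel (s a b c : ℝ) (h1 : a ^ 2 + a * b + b ^ 2 + s * (a + b) = 0)
    (h2 : a ^ 2 + a * c + c ^ 2 + s * (a + c) = 0) (hbc : b ≠ c) : a + b + c + s = 0 := by
  have h : (b - c) * (a + b + c + s) = 0 := by linear_combination h1 - h2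
  rcases mul_eq_zero.1 h with h | h
  · exact absurd (sub_eq_zero.1 h) hbc
  · exact h

/-- If `0 < ‖f‖² < 8α²λ³/27`, the cubic `2σ²(σ/α + λ) = ‖f‖²` has exactly
three distinct real roots `σ₁ > 0 > σ₂ > −2αλ/3 > σ₃ > −αλ`. -/
theorem stmt_6 (n : ℕ) (α lam : ℝ) (hα : 0 < α) (hlam : 0 < lam)
    (f : EuclideanSpace ℝ (Fin n))
    (hf : 0 < ‖f‖ ^ 2) (hf' : ‖f‖ ^ 2 < 8 * α ^ 2 * lam ^ 3 / 27) :
    ∃ σ₁ σ₂ σ₃ : ℝ,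
      σ₁ > 0 ∧ 0 > σ₂ ∧ σ₂ > -2 * α * lam / 3 ∧ -2 * α * lam / 3 > σ₃ ∧
      σ₃ > -α * lam ∧
      2 * σ₁ ^ 2 * (σ₁ / α + lam) = ‖f‖ ^ 2 ∧
      2 * σ₂ ^ 2 * (σ₂ / α + lam) = ‖f‖ ^ 2 ∧
      2 * σ₃ ^ 2 * (σ₃ / α + lam) = ‖f‖ ^ 2 ∧
      ∀ σ : ℝ, 2 * σ ^ 2 * (σ / α + lam) = ‖f‖ ^ 2 →
        σ = σ₁ ∨ σ = σ₂ ∨ σ = σ₃ := by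
  have hαne : (α : ℝ) ≠ 0 := hα.ne'
  set c := ‖f‖ ^ 2 with hc
  set g : ℝ → ℝ := fun σ => 2 * σ ^ 2 * (σ / α + lam) with hg
  have hcont : Continuous g := by simp only [hg]; continuity
  have g0 : g 0 = 0 := by simp [hg]
  have gneg : g (-(α * lam)) = 0 := by
    simp only [hg]
    field_simp
    ring
  have gmid : g (-(2 * α * lam / 3)) = 8 * α ^ 2 * lam ^ 3 / 27 := by
    simp only [hg]
    field_simp
    ring
  have gtop : g (α * lam) = 4 * α ^ 2 * lam ^ 3 := by
    simp only [hg]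
    field_simp
    ring
  -- σ₁ ∈ (0, α*lam)
  obtain ⟨σ₁, hσ₁mem, hσ₁⟩ : ∃ x ∈ Set.Ioo (0 : ℝ) (α * lam), g x = c := by
    have h := intermediate_value_Ioo (le_of_lt (by positivity : (0:ℝ) < α * lam))
      hcont.continuousOn
    have hmem : c ∈ Set.Ioo (g 0) (g (α * lam)) := by
      rw [g0, gtop]; exact ⟨hf, by nlinarith⟩
    exact h hmem
  -- σ₂ ∈ (-2αlam/3, 0)
  obtain ⟨σ₂, hσ₂mem, hσ₂⟩ : ∃ x ∈ Set.Ioo (-(2 * α * lam / 3)) (0 : ℝ), g x = c := by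
    have h := intermediate_value_Ioo' (by nlinarith : -(2 * α * lam / 3) ≤ (0:ℝ))
      hcont.continuousOn
    have hmem : c ∈ Set.Ioo (g 0) (g (-(2 * α * lam / 3))) := by
      rw [g0, gmid]; exact ⟨hf, hf'⟩
    exact h hmem
  -- σ₃ ∈ (-αlam, -2αlam/3)
  obtain ⟨σ₃, hσ₃mem, hσ₃⟩ : ∃ x ∈ Set.Ioo (-(α * lam)) (-(2 * α * lam / 3)), g x = c := by
    have h := intermediate_value_Ioo (by nlinarith : -(α * lam) ≤ -(2 * α * lam / 3))
      hcont.continuousOn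
    have hmem : c ∈ Set.Ioo (g (-(α * lam))) (g (-(2 * α * lam / 3))) := by
      rw [gneg, gmid]; exact ⟨hf, hf'⟩
    exact h hmem
  obtain ⟨h10, h1t⟩ := hσ₁mem
  obtain ⟨h2l, h20⟩ := hσ₂mem
  obtain ⟨h3l, h3u⟩ := hσ₃mem
  have cube : ∀ x : ℝ, g x = c → x ^ 3 + (α * lam) * x ^ 2 = α * c / 2 := by
    intro x hx
    simp only [hg] at hx
    field_simp at hx
    linarith
  have h12 : σ₁ ≠ σ₂ := by intro h; rw [h] at h10; linarith
  have h13 : σ₁ ≠ σ₃ := by intro h; rw [h] at h10; linarith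
  have h23 : σ₂ ≠ σ₃ := by intro h; rw [h] at h2l; linarith
  refine ⟨σ₁, σ₂, σ₃, h10, h20, by linarith, by linarith, by linarith, hσ₁, hσ₂, hσ₃, ?_⟩
  intro σ hσ
  by_cases hs2 : σ = σ₂
  · exact Or.inr (Or.inl hs2)
  by_cases hs3 : σ = σ₃
  · exact Or.inr (Or.inr hs3)
  left
  have q2 := quad_rel (α * lam) (α * c / 2) σ σ₂ (cube σ hσ) (cube σ₂ hσ₂) hs2
  have q3 := quad_rel (α * lam) (α * c / 2) σ σ₃ (cube σ hσ) (cube σ₃ hσ₃) hs3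
  have s1 := sum_rel (α * lam) σ σ₂ σ₃ q2 q3 h23
  have q12 := quad_rel (α * lam) (α * c / 2) σ₁ σ₂ (cube σ₁ hσ₁) (cube σ₂ hσ₂) h12
  have q13 := quad_rel (α * lam) (α * c / 2) σ₁ σ₃ (cube σ₁ hσ₁) (cube σ₃ hσ₃) h13
  have s2 := sum_rel (α * lam) σ₁ σ₂ σ₃ q12 q13 h23
  linarith
end

section
/- For 0 < |f|² < 8α²λ³/27, the numbers σ_k = (αλ/3)(2cos((1/3)arccos(27|f|²/(4α²λ³) − 1) + θ_k) − 1) for θ_k ∈ {0, 4π/3, 2π/3} are exactly the three real roots of the cubic 2σ²(σ/α + λ) = |f|². -/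
open Real

/-- For `0 < ‖f‖² < 8α²λ³/27`, the numbers
`σ_θ = (αλ/3)(2cos((1/3)arccos(27‖f‖²/(4α²λ³) − 1) + θ) − 1)` for
`θ ∈ {0, 4π/3, 2π/3}` are exactly the three real roots of the cubic
`2σ²(σ/α + λ) = ‖f‖²`. -/
theorem stmt_8 (n : ℕ) (α lam : ℝ) (hα : 0 < α) (hlam : 0 < lam)
    (f : EuclideanSpace ℝ (Fin n))
    (hf : 0 < ‖f‖ ^ 2) (hf' : ‖f‖ ^ 2 < 8 * α ^ 2 * lam ^ 3 / 27) :
    {σ : ℝ | 2 * σ ^ 2 * (σ / α + lam) = ‖f‖ ^ 2} =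
      (fun θ : ℝ => α * lam / 3 *
          (2 * Real.cos ((1 / 3) * Real.arccos (27 * ‖f‖ ^ 2 / (4 * α ^ 2 * lam ^ 3) - 1) + θ) - 1))
        '' {0, 4 * Real.pi / 3, 2 * Real.pi / 3} := by
  have hα' : α ≠ 0 := hα.ne'
  have hlam' : lam ≠ 0 := hlam.ne'
  set F := ‖f‖ ^ 2 with hFdef
  set c : ℝ := 27 * F / (4 * α ^ 2 * lam ^ 3) - 1 with hcdef
  have hden : (0:ℝ) < 4 * α ^ 2 * lam ^ 3 := by positivity
  have hc1 : -1 ≤ c := by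
    have h0 : 0 < 27 * F / (4 * α ^ 2 * lam ^ 3) := by positivity
    rw [hcdef]; linarith
  have hc2 : c ≤ 1 := by
    have h27 : 27 * F ≤ 2 * (4 * α ^ 2 * lam ^ 3) := by nlinarith
    have := (div_le_iff₀ hden).mpr h27
    rw [hcdef]; linarith
  have hφ : Real.cos (Real.arccos c) = c := Real.cos_arccos hc1 hc2
  set x : ℝ := 1 / 3 * Real.arccos c with hxdef
  have hF : F = (c + 1) * (4 * α ^ 2 * lam ^ 3) / 27 := by
    rw [hcdef]; field_simp; ring
  have hu : 4 * Real.cos x ^ 3 - 3 * Real.cos x = c := by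
    have h := Real.cos_three_mul x
    rw [show 3 * x = Real.arccos c by rw [hxdef]; ring, hφ] at h
    linarith
  have hv : 4 * Real.cos (x + 4 * π / 3) ^ 3 - 3 * Real.cos (x + 4 * π / 3) = c := by
    have h := Real.cos_three_mul (x + 4 * π / 3)
    rw [show 3 * (x + 4 * π / 3) = (Real.arccos c + 2 * π) + 2 * π by rw [hxdef]; ring,
      Real.cos_add_two_pi, Real.cos_add_two_pi, hφ] at h
    linarith
  have hw : 4 * Real.cos (x + 2 * π / 3) ^ 3 - 3 * Real.cos (x + 2 * π / 3) = c := by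
    have h := Real.cos_three_mul (x + 2 * π / 3)
    rw [show 3 * (x + 2 * π / 3) = Real.arccos c + 2 * π by rw [hxdef]; ring,
      Real.cos_add_two_pi, hφ] at h
    linarith
  have e43c : Real.cos (4 * π / 3) = -(1/2) := by
    rw [show (4 * π / 3 : ℝ) = π / 3 + π by ring, Real.cos_add_pi, Real.cos_pi_div_three]
  have e43s : Real.sin (4 * π / 3) = -(Real.sqrt 3 / 2) := by
    rw [show (4 * π / 3 : ℝ) = π / 3 + π by ring, Real.sin_add_pi, Real.sin_pi_div_three]
  have e23c : Real.cos (2 * π / 3) = -(1/2) := by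
    rw [show (2 * π / 3 : ℝ) = π - π / 3 by ring, Real.cos_pi_sub, Real.cos_pi_div_three]
  have e23s : Real.sin (2 * π / 3) = Real.sqrt 3 / 2 := by
    rw [show (2 * π / 3 : ℝ) = π - π / 3 by ring, Real.sin_pi_sub, Real.sin_pi_div_three]
  have hB : Real.cos (x + 4 * π / 3) = -(Real.cos x) / 2 + Real.sqrt 3 / 2 * Real.sin x := by
    rw [Real.cos_add, e43c, e43s]; ring
  have hC : Real.cos (x + 2 * π / 3) = -(Real.cos x) / 2 - Real.sqrt 3 / 2 * Real.sin x := by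
    rw [Real.cos_add, e23c, e23s]; ring
  have hs : Real.sin x ^ 2 = 1 - Real.cos x ^ 2 := by
    have := Real.sin_sq_add_cos_sq x; linarith
  have ht : Real.sqrt 3 ^ 2 = 3 := Real.sq_sqrt (by norm_num)
  ext σ
  simp only [Set.image_insert_eq, Set.image_singleton, Set.mem_insert_iff,
    Set.mem_singleton_iff, Set.mem_setOf_eq, add_zero]
  have hclear : 2 * σ ^ 2 * (σ / α + lam) = F ↔ 2 * σ ^ 3 + 2 * α * lam * σ ^ 2 = α * F := by
    constructor <;> intro h
    · field_simp [hα'] at h; linear_combination h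
    · field_simp [hα']; linear_combination h
  rw [hclear]
  constructor
  · intro h
    have key : (σ - α * lam / 3 * (2 * Real.cos x - 1)) *
        (σ - α * lam / 3 * (2 * Real.cos (x + 4 * π / 3) - 1)) *
        (σ - α * lam / 3 * (2 * Real.cos (x + 2 * π / 3) - 1)) = 0 := by
      rw [hB, hC]
      linear_combination (1/2) * h + (α/2) * hF +
        (-3*(α*lam/3)^2*σ + 3*(α*lam/3)^3*(2*Real.cos x - 1)) * hs +
        (-2*(α*lam/3)^3) * hu +
        ((-(α*lam/3)^2*σ + (α*lam/3)^3*(2*Real.cos x - 1)) * Real.sin x ^ 2) * ht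
    rcases mul_eq_zero.mp key with h2 | h3
    · rcases mul_eq_zero.mp h2 with h4 | h5
      · left; linarith [sub_eq_zero.mp h4]
      · right; left; linarith [sub_eq_zero.mp h5]
    · right; right; linarith [sub_eq_zero.mp h3]
  · rintro (rfl | rfl | rfl)
    · linear_combination 4 * (α*lam/3)^3 * hu - α * hF
    · linear_combination 4 * (α*lam/3)^3 * hv - α * hF
    · linear_combination 4 * (α*lam/3)^3 * hw - α * hF
end

section
/- If σ₁ > 0 satisfies 2σ₁²(σ₁/α + λ) = |f|², then x₁ = f/σ₁ is a global minimizer of Π over ℝⁿ. -/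
open RealInnerProductSpace

/-- If `σ₁ > 0` satisfies `2σ₁²(σ₁/α + λ) = ‖f‖²`, then `x₁ = f/σ₁` is a
global minimizer of `Π` over `ℝⁿ`. -/
theorem stmt_10 (n : ℕ) (α lam : ℝ) (hα : 0 < α) (hlam : 0 < lam)
    (f : EuclideanSpace ℝ (Fin n)) (hf : f ≠ 0)
    (σ₁ : ℝ) (hσ₁ : 0 < σ₁) (hroot : 2 * σ₁ ^ 2 * (σ₁ / α + lam) = ‖f‖ ^ 2) :
    ∀ x : EuclideanSpace ℝ (Fin n),
      α / 2 * (‖σ₁⁻¹ • f‖ ^ 2 / 2 - lam) ^ 2 - ⟪f, σ₁⁻¹ • f⟫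
        ≤ α / 2 * (‖x‖ ^ 2 / 2 - lam) ^ 2 - ⟪f, x⟫ := by
  intro x
  have hs : σ₁ ≠ 0 := ne_of_gt hσ₁
  have hα' : α ≠ 0 := ne_of_gt hα
  set a : ℝ := ‖x‖ ^ 2 with ha
  set b : ℝ := ⟪f, x⟫ with hb
  set F : ℝ := ‖f‖ ^ 2 with hF
  have hnf : ‖σ₁⁻¹ • f‖ ^ 2 = σ₁⁻¹ ^ 2 * F := by
    rw [norm_smul]
    simp [abs_of_pos hσ₁, mul_pow]
    exact Or.inl hF.symm
  have hif : ⟪f, σ₁⁻¹ • f⟫ = σ₁⁻¹ * F := by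
    rw [inner_smul_right, real_inner_self_eq_norm_sq]
  have hbx : ⟪x, f⟫ = b := (real_inner_comm x f).symm
  have hdist : ‖x - σ₁⁻¹ • f‖ ^ 2 = a - 2 * (σ₁⁻¹ * b) + σ₁⁻¹ ^ 2 * F := by
    rw [@norm_sub_sq_real, inner_smul_right, hbx, hnf]
  have key : 0 ≤ α / 2 * (a / 2 - lam - σ₁ / α) ^ 2
      + σ₁ / 2 * (a - 2 * (σ₁⁻¹ * b) + σ₁⁻¹ ^ 2 * F) := by
    rw [← hdist]
    positivity
  rw [hnf, hif]
  have hF' : F = 2 * σ₁ ^ 2 * (σ₁ / α + lam) := hroot.symm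
  rw [hF'] at key ⊢
  have hid : α / 2 * (a / 2 - lam) ^ 2 - b -
      (α / 2 * (σ₁⁻¹ ^ 2 * (2 * σ₁ ^ 2 * (σ₁ / α + lam)) / 2 - lam) ^ 2
        - σ₁⁻¹ * (2 * σ₁ ^ 2 * (σ₁ / α + lam)))
      = α / 2 * (a / 2 - lam - σ₁ / α) ^ 2
        + σ₁ / 2 * (a - 2 * (σ₁⁻¹ * b) + σ₁⁻¹ ^ 2 * (2 * σ₁ ^ 2 * (σ₁ / α + lam))) := by
    field_simp
    ring
  linarith [key, hid]
end

section
/- min over x ∈ ℝⁿ of Π(x) equals max over σ ∈ (0, ∞) of Π^d(σ): both are attained and equal, at x₁ = f/σ₁ and σ₁ respectively, where σ₁ is the unique positive root of 2σ²(σ/α + λ) = |f|². -/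
open RealInnerProductSpace

set_option maxHeartbeats 1000000 in
/-- `min Π = max_{σ>0} Π^d`: both are attained (at `x₁ = f/σ₁` and at `σ₁`
respectively, where `σ₁` is the unique positive root of
`2σ²(σ/α + λ) = ‖f‖²`) and equal. -/
theorem stmt_12 (n : ℕ) (α lam : ℝ) (hα : 0 < α) (hlam : 0 < lam)
    (f : EuclideanSpace ℝ (Fin n)) (hf : f ≠ 0) :
    ∃ σ₁ : ℝ, 0 < σ₁ ∧ 2 * σ₁ ^ 2 * (σ₁ / α + lam) = ‖f‖ ^ 2 ∧
      (∀ σ : ℝ, 0 < σ → 2 * σ ^ 2 * (σ / α + lam) = ‖f‖ ^ 2 → σ = σ₁) ∧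
      (∀ x : EuclideanSpace ℝ (Fin n),
        α / 2 * (‖σ₁⁻¹ • f‖ ^ 2 / 2 - lam) ^ 2 - ⟪f, σ₁⁻¹ • f⟫
          ≤ α / 2 * (‖x‖ ^ 2 / 2 - lam) ^ 2 - ⟪f, x⟫) ∧
      (∀ σ : ℝ, 0 < σ →
        -‖f‖ ^ 2 / (2 * σ) - σ ^ 2 / (2 * α) - σ * lam
          ≤ -‖f‖ ^ 2 / (2 * σ₁) - σ₁ ^ 2 / (2 * α) - σ₁ * lam) ∧
      α / 2 * (‖σ₁⁻¹ • f‖ ^ 2 / 2 - lam) ^ 2 - ⟪f, σ₁⁻¹ • f⟫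
        = -‖f‖ ^ 2 / (2 * σ₁) - σ₁ ^ 2 / (2 * α) - σ₁ * lam := by
  have hfpos : 0 < ‖f‖ := norm_pos_iff.mpr hf
  have hc : 0 < ‖f‖ ^ 2 := by positivity
  have hα' : α ≠ 0 := hα.ne'
  -- existence of σ₁ by IVT
  obtain ⟨M, hMdef⟩ : ∃ M : ℝ, M = Real.sqrt (‖f‖ ^ 2 / (2 * lam)) + 1 := ⟨_, rfl⟩
  have hM : 0 < M := by rw [hMdef]; positivity
  have hsq : Real.sqrt (‖f‖ ^ 2 / (2 * lam)) ^ 2 = ‖f‖ ^ 2 / (2 * lam) :=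
    Real.sq_sqrt (by positivity)
  have hMc : ‖f‖ ^ 2 ≤ 2 * M ^ 2 * (M / α + lam) := by
    have h1 : ‖f‖ ^ 2 / (2 * lam) < M ^ 2 := by
      rw [hMdef]
      nlinarith [Real.sqrt_nonneg (‖f‖ ^ 2 / (2 * lam))]
    have h2 : ‖f‖ ^ 2 < 2 * lam * M ^ 2 := by
      have := (div_lt_iff₀ (by positivity : (0:ℝ) < 2 * lam)).mp h1
      nlinarith
    have h3 : 0 < M / α := by positivity
    nlinarith [mul_pos (pow_pos hM 2) h3]
  have hcont : ContinuousOn (fun σ : ℝ => 2 * σ ^ 2 * (σ / α + lam))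
      (Set.Icc 0 M) := by fun_prop
  have hivt := intermediate_value_Icc hM.le hcont
  have hmem : ‖f‖ ^ 2 ∈ Set.Icc ((fun σ : ℝ => 2 * σ ^ 2 * (σ / α + lam)) 0)
      ((fun σ : ℝ => 2 * σ ^ 2 * (σ / α + lam)) M) := by
    simp only [Set.mem_Icc]
    constructor
    · simpa using hc.le
    · simpa using hMc
  obtain ⟨σ₁, hσmem, hgσ₁⟩ := hivt hmem
  simp only at hgσ₁
  have hσ₁ : 0 < σ₁ := by
    rcases lt_or_eq_of_le hσmem.1 with h | h
    · exact h
    · exfalso; rw [← h] at hgσ₁; simp at hgσ₁; nlinarith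
  -- cleared-denominator form of the defining equation
  have hE : 2 * σ₁ ^ 3 + 2 * lam * α * σ₁ ^ 2 = ‖f‖ ^ 2 * α := by
    have h := hgσ₁
    field_simp at h
    linear_combination h
  -- basic facts about x₁ = σ₁⁻¹ • f
  have hnorm : ‖σ₁⁻¹ • f‖ = ‖f‖ / σ₁ := by
    rw [norm_smul, Real.norm_eq_abs, abs_of_pos (inv_pos.mpr hσ₁)]
    ring
  have hip : ⟪f, σ₁⁻¹ • f⟫ = ‖f‖ ^ 2 / σ₁ := by
    rw [real_inner_smul_right, real_inner_self_eq_norm_sq]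
    ring
  obtain ⟨r, hrdef⟩ : ∃ r : ℝ, r = ‖f‖ / σ₁ := ⟨_, rfl⟩
  rw [← hrdef] at hnorm
  have hr : 0 < r := by rw [hrdef]; positivity
  have hfr : ‖f‖ = σ₁ * r := by rw [hrdef]; field_simp
  have hf2 : ‖f‖ ^ 2 = σ₁ ^ 2 * r ^ 2 := by rw [hfr]; ring
  have hr2 : α * r ^ 2 = 2 * σ₁ + 2 * α * lam := by
    have h2 : σ₁ ^ 2 * (α * r ^ 2) = σ₁ ^ 2 * (2 * σ₁ + 2 * α * lam) := by
      linear_combination (-α) * hf2 - hE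
    exact mul_left_cancel₀ (pow_ne_zero 2 hσ₁.ne') h2
  have hσeq : σ₁ = α * (r ^ 2 - 2 * lam) / 2 := by linarith
  have hr2lam : 2 * lam < r ^ 2 := by nlinarith
  have e1 : ‖f‖ ^ 2 / σ₁ = σ₁ * r ^ 2 := by
    rw [hf2]; field_simp
  refine ⟨σ₁, hσ₁, hgσ₁, ?_, ?_, ?_, ?_⟩
  · -- uniqueness
    intro σ hσ hgσ
    have eσ : 2 * σ ^ 3 + 2 * lam * α * σ ^ 2 = ‖f‖ ^ 2 * α := by
      field_simp at hgσ
      linear_combination hgσ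
    have h' : (σ - σ₁) * (2 * (σ ^ 2 + σ * σ₁ + σ₁ ^ 2) + 2 * lam * α * (σ + σ₁)) = 0 := by
      linear_combination eσ - hE
    have hpos : 0 < 2 * (σ ^ 2 + σ * σ₁ + σ₁ ^ 2) + 2 * lam * α * (σ + σ₁) := by
      nlinarith [mul_pos hσ hσ₁, mul_pos (mul_pos hlam hα) (add_pos hσ hσ₁),
        sq_nonneg σ, sq_nonneg σ₁]
    rcases mul_eq_zero.mp h' with h0 | h0
    · linarith
    · linarith
  · -- primal minimality
    intro x
    have hcs : ⟪f, x⟫ ≤ ‖f‖ * ‖x‖ := real_inner_le_norm f x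
    have ht0 : (0:ℝ) ≤ ‖x‖ := norm_nonneg x
    obtain ⟨t, htdef⟩ : ∃ t : ℝ, t = ‖x‖ := ⟨_, rfl⟩
    obtain ⟨p, hpdef⟩ : ∃ p : ℝ, p = ⟪f, x⟫ := ⟨_, rfl⟩
    rw [hnorm, hip, e1, ← htdef, ← hpdef]
    rw [← htdef] at ht0
    rw [← htdef, ← hpdef, hfr] at hcs
    have key : α / 2 * (r ^ 2 / 2 - lam) ^ 2 - σ₁ * r ^ 2
        ≤ α / 2 * (t ^ 2 / 2 - lam) ^ 2 - σ₁ * r * t := by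
      rw [hσeq]
      have hq : 0 ≤ t ^ 2 + 2 * r * t + 3 * r ^ 2 - 4 * lam := by
        nlinarith [mul_nonneg ht0 hr.le, sq_nonneg t]
      nlinarith [mul_nonneg (mul_nonneg hα.le (sq_nonneg (t - r))) hq]
    nlinarith [key, hcs]
  · -- dual maximality
    intro σ hσ
    rw [← sub_nonneg, hf2]
    have h2 : (0:ℝ) < 2 * σ * σ₁ * α := by positivity
    have key : (-(σ₁ ^ 2 * r ^ 2) / (2 * σ₁) - σ₁ ^ 2 / (2 * α) - σ₁ * lam)
          - (-(σ₁ ^ 2 * r ^ 2) / (2 * σ) - σ ^ 2 / (2 * α) - σ * lam)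
        = σ₁ * (σ - σ₁) ^ 2 * (σ + 2 * σ₁ + 2 * α * lam) / (2 * σ * σ₁ * α) := by
      rw [eq_div_iff h2.ne']
      field_simp
      linear_combination (σ₁^2 - σ₁*σ) * hr2
    rw [key]
    positivity
  · -- equality of values
    rw [hnorm, hip, hf2]
    field_simp
    linear_combination (α*r^2 - 2*α*lam - 2*σ₁) * hr2
end

section
/- If σ is a nonzero root of 2σ²(σ/α + λ) = |f|², then the second derivative of Π^d at σ equals (3σ + 2αλ)/(−ασ). In particular, for a root σ₃ with −αλ < σ₃ < −2αλ/3 we have (Π^d)''(σ₃) < 0, and for a root σ₂ with −2αλ/3 < σ₂ < 0 we have (Π^d)''(σ₂) > 0. -/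
lemma aux_d1 (c α lam : ℝ) (hα : α ≠ 0) {s : ℝ} (hs : s ≠ 0) :
    HasDerivAt (fun s : ℝ => -c / (2 * s) - s ^ 2 / (2 * α) - s * lam)
      (c / (2 * s ^ 2) - s / α - lam) s := by
  have h1 : HasDerivAt (fun s : ℝ => -c / (2 * s)) (c / (2 * s ^ 2)) s := by
    have h := (hasDerivAt_inv hs).const_mul (-c / 2)
    refine (h.congr_deriv ?_).congr_of_eventuallyEq (Filter.Eventually.of_forall fun t => ?_)
    · field_simp
    · dsimp only; ring
  have h2 : HasDerivAt (fun s : ℝ => s ^ 2 / (2 * α)) (s / α) s := by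
    have h := (hasDerivAt_pow 2 s).div_const (2 * α)
    refine h.congr_deriv ?_
    field_simp; ring
  have h3 : HasDerivAt (fun s : ℝ => s * lam) lam s := by
    simpa using (hasDerivAt_id s).mul_const lam
  exact (h1.sub h2).sub h3

lemma aux_d2 (c α lam : ℝ) (hα : α ≠ 0) {s : ℝ} (hs : s ≠ 0) :
    HasDerivAt (fun s : ℝ => c / (2 * s ^ 2) - s / α - lam)
      (-c / s ^ 3 - 1 / α) s := by
  have h1 : HasDerivAt (fun s : ℝ => c / (2 * s ^ 2)) (-c / s ^ 3) s := by
    have h := ((hasDerivAt_pow 2 s).inv (pow_ne_zero 2 hs)).const_mul (c / 2)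
    refine (h.congr_deriv ?_).congr_of_eventuallyEq (Filter.Eventually.of_forall fun t => ?_)
    · field_simp; ring
    · simp only [Pi.inv_apply]; ring
  have h2 : HasDerivAt (fun s : ℝ => s / α) (1 / α) s := by
    simpa using (hasDerivAt_id s).div_const α
  have h3 : HasDerivAt (fun _ : ℝ => lam) 0 s := hasDerivAt_const s lam
  exact ((h1.sub h2).sub h3).congr_deriv (by ring)

lemma aux_dd (c α lam : ℝ) (hα : α ≠ 0) {σ : ℝ} (hσ : σ ≠ 0) :
    deriv (deriv (fun s : ℝ => -c / (2 * s) - s ^ 2 / (2 * α) - s * lam)) σ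
      = -c / σ ^ 3 - 1 / α := by
  have hev : ∀ᶠ s in nhds σ, deriv (fun s : ℝ => -c / (2 * s) - s ^ 2 / (2 * α) - s * lam) s
      = c / (2 * s ^ 2) - s / α - lam := by
    filter_upwards [isOpen_compl_singleton.mem_nhds (by simpa using hσ : σ ∈ ({0}ᶜ : Set ℝ))]
      with s hs
    exact (aux_d1 c α lam hα (by simpa using hs)).deriv
  rw [Filter.EventuallyEq.deriv_eq hev]
  exact (aux_d2 c α lam hα hσ).deriv

/-- If `σ` is a nonzero root of `2σ²(σ/α + λ) = ‖f‖²`, then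
`(Π^d)''(σ) = (3σ + 2αλ)/(−ασ)`; in particular it is negative for a root
in `(−αλ, −2αλ/3)` and positive for a root in `(−2αλ/3, 0)`. -/
theorem stmt_13 (n : ℕ) (α lam : ℝ) (hα : 0 < α) (hlam : 0 < lam)
    (f : EuclideanSpace ℝ (Fin n)) (hf : f ≠ 0) :
    (∀ σ : ℝ, σ ≠ 0 → 2 * σ ^ 2 * (σ / α + lam) = ‖f‖ ^ 2 →
      deriv (deriv (fun s : ℝ => -‖f‖ ^ 2 / (2 * s) - s ^ 2 / (2 * α) - s * lam)) σ
        = (3 * σ + 2 * α * lam) / (-α * σ)) ∧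
    (∀ σ₃ : ℝ, 2 * σ₃ ^ 2 * (σ₃ / α + lam) = ‖f‖ ^ 2 →
      -α * lam < σ₃ → σ₃ < -2 * α * lam / 3 →
      deriv (deriv (fun s : ℝ => -‖f‖ ^ 2 / (2 * s) - s ^ 2 / (2 * α) - s * lam)) σ₃ < 0) ∧
    (∀ σ₂ : ℝ, 2 * σ₂ ^ 2 * (σ₂ / α + lam) = ‖f‖ ^ 2 →
      -2 * α * lam / 3 < σ₂ → σ₂ < 0 →
      0 < deriv (deriv (fun s : ℝ => -‖f‖ ^ 2 / (2 * s) - s ^ 2 / (2 * α) - s * lam)) σ₂) := by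
  have hα' : α ≠ 0 := ne_of_gt hα
  have key : ∀ σ : ℝ, σ ≠ 0 → 2 * σ ^ 2 * (σ / α + lam) = ‖f‖ ^ 2 →
      deriv (deriv (fun s : ℝ => -‖f‖ ^ 2 / (2 * s) - s ^ 2 / (2 * α) - s * lam)) σ
        = (3 * σ + 2 * α * lam) / (-α * σ) := by
    intro σ hσ hroot
    rw [aux_dd (‖f‖ ^ 2) α lam hα' hσ, ← hroot]
    field_simp
    ring
  refine ⟨key, ?_, ?_⟩
  · intro σ₃ hroot h1 h2
    have hσ : σ₃ ≠ 0 := by nlinarith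
    rw [key σ₃ hσ hroot]
    apply div_neg_of_neg_of_pos
    · nlinarith
    · nlinarith
  · intro σ₂ hroot h1 h2
    have hσ : σ₂ ≠ 0 := ne_of_lt h2
    rw [key σ₂ hσ hroot]
    apply div_pos
    · nlinarith
    · nlinarith
end

section
/- If σ₃ is a root of 2σ²(σ/α + λ) = |f|² with −αλ < σ₃ < −2αλ/3, and x₃ = f/σ₃, then the Hessian of Π at x₃ is negative semidefinite: for all z ∈ ℝⁿ, zᵀ∇²Π(x₃)z ≤ α|z|²(3σ₃/α + 2λ) ≤ 0. Hence x₃ is a local maximizer of Π. -/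
open RealInnerProductSpace

private lemma aux14 (α lam σ N p w : ℝ) (hN2 : α * N ^ 2 = 2 * σ + 2 * α * lam)
    (hfac : σ + α * (N + w / 2) ^ 2 ≤ 0) (hp : |p| ≤ N * w) (hw : 0 ≤ w)
    (hα : 0 < α) :
    α / 2 * ((N ^ 2 + 2 * p + w ^ 2) / 2 - lam) ^ 2 - (σ * N ^ 2 + σ * p)
      ≤ α / 2 * (N ^ 2 / 2 - lam) ^ 2 - σ * N ^ 2 := by
  have hAt : α * (N ^ 2 / 2 - lam) = σ := by linarith
  have expand : α / 2 * ((N ^ 2 + 2 * p + w ^ 2) / 2 - lam) ^ 2 - (σ * N ^ 2 + σ * p)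
      - (α / 2 * (N ^ 2 / 2 - lam) ^ 2 - σ * N ^ 2)
      = σ * w ^ 2 / 2 + α / 2 * (p + w ^ 2 / 2) ^ 2 := by
    linear_combination (p + w ^ 2 / 2) * hAt
  have hple := abs_le.mp hp
  have ht : (p + w ^ 2 / 2) ^ 2 ≤ (N * w + w ^ 2 / 2) ^ 2 := by
    apply sq_le_sq' <;> nlinarith [hple.1, hple.2, sq_nonneg w]
  have h1 : α / 2 * (p + w ^ 2 / 2) ^ 2 ≤ α / 2 * (N * w + w ^ 2 / 2) ^ 2 :=
    mul_le_mul_of_nonneg_left ht (by positivity)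
  have h2 : w ^ 2 / 2 * (σ + α * (N + w / 2) ^ 2) ≤ 0 :=
    mul_nonpos_of_nonneg_of_nonpos (by positivity) hfac
  nlinarith [h1, h2]

/-- If `σ₃` is a root of `2σ²(σ/α + λ) = ‖f‖²` with `−αλ < σ₃ < −2αλ/3` and
`x₃ = f/σ₃`, then the Hessian of `Π` at `x₃` is negative semidefinite:
`zᵀ∇²Π(x₃)z = α(⟪f,z⟫²/σ₃² + (σ₃/α)‖z‖²) ≤ α‖z‖²(3σ₃/α + 2λ) ≤ 0` for all `z`;
hence `x₃` is a local maximizer of `Π`. -/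
theorem stmt_14 (n : ℕ) (α lam : ℝ) (hα : 0 < α) (hlam : 0 < lam)
    (f : EuclideanSpace ℝ (Fin n)) (hf : f ≠ 0)
    (σ₃ : ℝ) (hroot : 2 * σ₃ ^ 2 * (σ₃ / α + lam) = ‖f‖ ^ 2)
    (h₁ : -α * lam < σ₃) (h₂ : σ₃ < -2 * α * lam / 3) :
    (∀ z : EuclideanSpace ℝ (Fin n),
      α * (⟪f, z⟫ ^ 2 / σ₃ ^ 2 + (σ₃ / α) * ‖z‖ ^ 2)
        ≤ α * ‖z‖ ^ 2 * (3 * σ₃ / α + 2 * lam) ∧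
      α * ‖z‖ ^ 2 * (3 * σ₃ / α + 2 * lam) ≤ 0) ∧
    IsLocalMax (fun x : EuclideanSpace ℝ (Fin n) =>
      α / 2 * (‖x‖ ^ 2 / 2 - lam) ^ 2 - ⟪f, x⟫) (σ₃⁻¹ • f) := by
  have hσneg : σ₃ < 0 := by nlinarith [mul_pos hα hlam]
  have hσne : σ₃ ≠ 0 := ne_of_lt hσneg
  have hσ2 : (0:ℝ) < σ₃ ^ 2 := by positivity
  constructor
  · intro z
    have hcs : ⟪f, z⟫ ^ 2 ≤ ‖f‖ ^ 2 * ‖z‖ ^ 2 := by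
      have h := abs_real_inner_le_norm f z
      nlinarith [abs_nonneg (⟪f, z⟫ : ℝ), sq_abs (⟪f, z⟫ : ℝ), norm_nonneg f, norm_nonneg z]
    constructor
    · have key : ⟪f, z⟫ ^ 2 / σ₃ ^ 2 ≤ 2 * (σ₃ / α + lam) * ‖z‖ ^ 2 := by
        rw [div_le_iff₀ hσ2]
        nlinarith [hcs]
      calc α * (⟪f, z⟫ ^ 2 / σ₃ ^ 2 + (σ₃ / α) * ‖z‖ ^ 2)
          ≤ α * (2 * (σ₃ / α + lam) * ‖z‖ ^ 2 + (σ₃ / α) * ‖z‖ ^ 2) := by nlinarith [key]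
        _ = α * ‖z‖ ^ 2 * (3 * σ₃ / α + 2 * lam) := by field_simp; ring
    · have hb : 3 * σ₃ / α ≤ -(2 * lam) := by
        rw [div_le_iff₀ hα]; nlinarith
      exact mul_nonpos_of_nonneg_of_nonpos (by positivity) (by linarith)
  · set x₃ : EuclideanSpace ℝ (Fin n) := σ₃⁻¹ • f with hx₃def
    have hf3 : f = σ₃ • x₃ := (smul_inv_smul₀ hσne f).symm
    set N : ℝ := ‖x₃‖ with hNdef
    have hN : 0 ≤ N := norm_nonneg _
    have hNsq : α * N ^ 2 = 2 * σ₃ + 2 * α * lam := by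
      have h1 : N ^ 2 = ‖f‖ ^ 2 / σ₃ ^ 2 := by
        rw [hNdef, hx₃def, norm_smul, mul_pow, norm_inv, Real.norm_eq_abs, inv_pow, sq_abs]
        field_simp
      rw [h1, ← hroot]
      field_simp
    set c : ℝ := -(3 * σ₃ + 2 * α * lam) with hcdef
    have hc : 0 < c := by simp only [hcdef]; nlinarith
    set ε : ℝ := min 1 (c / (α * (N + 1))) with hεdef
    have hεpos : 0 < ε := lt_min one_pos (div_pos hc (by positivity))
    have hε1 : ε ≤ 1 := min_le_left _ _
    have hε2 : ε * (α * (N + 1)) ≤ c := by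
      have := min_le_right 1 (c / (α * (N + 1)))
      exact (le_div_iff₀ (by positivity)).mp ((hεdef ▸ this))
    filter_upwards [Metric.ball_mem_nhds x₃ hεpos] with x hx
    set z : EuclideanSpace ℝ (Fin n) := x - x₃ with hzdef
    have hxz : x = x₃ + z := by rw [hzdef]; abel
    set w : ℝ := ‖z‖ with hwdef
    have hw : 0 ≤ w := norm_nonneg _
    have hwε : w ≤ ε := by
      rw [Metric.mem_ball, dist_eq_norm] at hx
      exact le_of_lt hx
    set p : ℝ := ⟪x₃, z⟫ with hpdef
    have hp : |p| ≤ N * w := abs_real_inner_le_norm x₃ z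
    have hfac : σ₃ + α * (N + w / 2) ^ 2 ≤ 0 := by
      have hww : w ^ 2 ≤ w := by nlinarith
      have h3 : α * w ^ 2 ≤ α * w := mul_le_mul_of_nonneg_left hww hα.le
      have h4 : α * (N + 1) * w ≤ α * (N + 1) * ε :=
        mul_le_mul_of_nonneg_left hwε (by positivity)
      have h5 : (0:ℝ) ≤ α * w := mul_nonneg hα.le hw
      calc σ₃ + α * (N + w / 2) ^ 2
          = σ₃ + (α * N ^ 2 + α * (N + 1) * w - α * w + α * w ^ 2 / 4) := by ring
        _ ≤ 0 := by linarith [hε2, hcdef, hNsq, h3, h4, h5]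
    have hnorm : ‖x₃ + z‖ ^ 2 = N ^ 2 + 2 * p + w ^ 2 := by
      rw [hNdef, hpdef, hwdef]; exact norm_add_sq_real x₃ z
    have i1 : ⟪f, x₃⟫ = σ₃ * N ^ 2 := by
      rw [hf3, real_inner_smul_left, real_inner_self_eq_norm_sq]
    have i2 : ⟪f, z⟫ = σ₃ * p := by
      rw [hf3, real_inner_smul_left, hpdef]
    have hinner : ⟪f, x₃ + z⟫ = σ₃ * N ^ 2 + σ₃ * p := by
      rw [inner_add_right, i1, i2]
    simp only [hxz]
    rw [hnorm, hinner, i1]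
    have := aux14 α lam σ₃ N p w hNsq hfac hp hw hα
    linarith
end

section
/- Let σ₂ be a root of 2σ²(σ/α + λ) = |f|² with −2αλ/3 < σ₂ < 0, x₂ = f/σ₂, and z ∈ ℝⁿ \ {0}. Define φ(t) = Π(x₂ + tz). Then φ'(0) = 0 and φ''(0) = |z|²((2σ₂ + 2αλ)cos²θ + σ₂), where cosθ = ⟨f, z⟩/(|f||z|). Consequently, if cos²θ < −σ₂/(2σ₂ + 2αλ) then t = 0 is a strict local maximizer of φ, and if cos²θ > −σ₂/(2σ₂ + 2αλ) then t = 0 is a strict local minimizer of φ; in particular x₂ is a saddle point of Π (for n ≥ 2). -/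
lemma myPolyDeriv (p q r s u v : ℝ) (t : ℝ) :
    HasDerivAt (fun t : ℝ => p * (q + r * t + s * t ^ 2) ^ 2 - (u + v * t))
      (p * (2 * (q + r * t + s * t ^ 2) * (r + 2 * s * t)) - v) t := by
  have h1 : HasDerivAt (fun t : ℝ => q + r * t + s * t ^ 2) (r + 2 * s * t) t := by
    have := (((hasDerivAt_id t).const_mul r).const_add q).add
      ((hasDerivAt_pow 2 t).const_mul s)
    refine this.congr_deriv ?_
    push_cast; ring
  have h2 := (h1.pow 2).const_mul p
  have h3 : HasDerivAt (fun t : ℝ => u + v * t) v t := by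
    simpa using ((hasDerivAt_id t).const_mul v).const_add u
  refine (h2.sub h3).congr_deriv ?_
  push_cast; ring

lemma myPolyDeriv2 (p q r s v : ℝ) (t : ℝ) :
    HasDerivAt (fun t : ℝ => p * (2 * (q + r * t + s * t ^ 2) * (r + 2 * s * t)) - v)
      (p * (2 * ((r + 2 * s * t) * (r + 2 * s * t) + (q + r * t + s * t ^ 2) * (2 * s)))) t := by
  have h1 : HasDerivAt (fun t : ℝ => q + r * t + s * t ^ 2) (r + 2 * s * t) t := by
    have := (((hasDerivAt_id t).const_mul r).const_add q).add
      ((hasDerivAt_pow 2 t).const_mul s)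
    refine this.congr_deriv ?_
    push_cast; ring
  have h2 : HasDerivAt (fun t : ℝ => r + 2 * s * t) (2 * s) t := by
    simpa using ((hasDerivAt_id t).const_mul (2 * s)).const_add r
  have h3 := ((h1.mul h2).const_mul (2 : ℝ)).const_mul p
  have h4 := h3.sub_const v
  have : (fun t : ℝ => p * (2 * (q + r * t + s * t ^ 2) * (r + 2 * s * t)) - v)
      = fun x : ℝ => p * (2 * ((q + r * x + s * x ^ 2) * (r + 2 * s * x))) - v := by
    funext x; ring
  rw [this]; exact h4

open RealInnerProductSpace

section Aux
variable {n : ℕ} (α lam : ℝ) (f z : EuclideanSpace ℝ (Fin n)) (σ₂ : ℝ)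

set_option maxHeartbeats 1000000 in
lemma aux_all (hα : 0 < α) (hlam : 0 < lam) (hf : f ≠ 0)
    (hroot : 2 * σ₂ ^ 2 * (σ₂ / α + lam) = ‖f‖ ^ 2)
    (h₁ : -2 * α * lam / 3 < σ₂) (h₂ : σ₂ < 0) (hz : z ≠ 0) :
    deriv (fun t : ℝ =>
        α / 2 * (‖σ₂⁻¹ • f + t • z‖ ^ 2 / 2 - lam) ^ 2 - ⟪f, σ₂⁻¹ • f + t • z⟫) 0 = 0 ∧
    deriv (deriv (fun t : ℝ =>
        α / 2 * (‖σ₂⁻¹ • f + t • z‖ ^ 2 / 2 - lam) ^ 2 - ⟪f, σ₂⁻¹ • f + t • z⟫)) 0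
      = ‖z‖ ^ 2 * ((2 * σ₂ + 2 * α * lam) * (⟪f, z⟫ / (‖f‖ * ‖z‖)) ^ 2 + σ₂) ∧
    ((⟪f, z⟫ / (‖f‖ * ‖z‖)) ^ 2 < -σ₂ / (2 * σ₂ + 2 * α * lam) →
      ∃ ε > 0, ∀ t : ℝ, t ≠ 0 → |t| < ε →
        α / 2 * (‖σ₂⁻¹ • f + t • z‖ ^ 2 / 2 - lam) ^ 2 - ⟪f, σ₂⁻¹ • f + t • z⟫
          < α / 2 * (‖σ₂⁻¹ • f‖ ^ 2 / 2 - lam) ^ 2 - ⟪f, σ₂⁻¹ • f⟫) ∧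
    ((⟪f, z⟫ / (‖f‖ * ‖z‖)) ^ 2 > -σ₂ / (2 * σ₂ + 2 * α * lam) →
      ∃ ε > 0, ∀ t : ℝ, t ≠ 0 → |t| < ε →
        α / 2 * (‖σ₂⁻¹ • f‖ ^ 2 / 2 - lam) ^ 2 - ⟪f, σ₂⁻¹ • f⟫
          < α / 2 * (‖σ₂⁻¹ • f + t • z‖ ^ 2 / 2 - lam) ^ 2 - ⟪f, σ₂⁻¹ • f + t • z⟫) := by
  have hσ : σ₂ ≠ 0 := ne_of_lt h₂
  have hαne : α ≠ 0 := ne_of_gt hα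
  have hfn : ‖f‖ ≠ 0 := norm_ne_zero_iff.2 hf
  have hzn : ‖z‖ ≠ 0 := norm_ne_zero_iff.2 hz
  have hzpos : 0 < ‖z‖ ^ 2 := by positivity
  have hD : 0 < 2 * σ₂ + 2 * α * lam := by nlinarith
  have hx2 : ‖σ₂⁻¹ • f‖ ^ 2 = σ₂⁻¹ ^ 2 * ‖f‖ ^ 2 := by
    rw [norm_smul, mul_pow, Real.norm_eq_abs, sq_abs]
  have hq : ‖σ₂⁻¹ • f‖ ^ 2 / 2 - lam = σ₂ / α := by
    rw [hx2, ← hroot]; field_simp; ring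
  have hx2' : ‖σ₂⁻¹ • f‖ ^ 2 = 2 * (σ₂ / α) + 2 * lam := by
    rw [hx2, ← hroot]; field_simp
  have hfun : (fun t : ℝ =>
        α / 2 * (‖σ₂⁻¹ • f + t • z‖ ^ 2 / 2 - lam) ^ 2 - ⟪f, σ₂⁻¹ • f + t • z⟫)
      = fun t : ℝ => α / 2 * (σ₂ / α + (σ₂⁻¹ * ⟪f, z⟫) * t + (‖z‖ ^ 2 / 2) * t ^ 2) ^ 2
          - (σ₂⁻¹ * ‖f‖ ^ 2 + ⟪f, z⟫ * t) := by
    funext t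
    have hnorm : ‖σ₂⁻¹ • f + t • z‖ ^ 2
        = (2 * (σ₂ / α) + 2 * lam) + 2 * (σ₂⁻¹ * (t * ⟪f, z⟫)) + t ^ 2 * ‖z‖ ^ 2 := by
      rw [norm_add_sq_real, real_inner_smul_left, real_inner_smul_right, hx2',
        norm_smul, mul_pow, Real.norm_eq_abs, sq_abs]
    have hinner : ⟪f, σ₂⁻¹ • f + t • z⟫ = σ₂⁻¹ * ‖f‖ ^ 2 + ⟪f, z⟫ * t := by
      rw [inner_add_right, real_inner_smul_right, real_inner_smul_right,
        real_inner_self_eq_norm_sq]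
      ring
    rw [hnorm, hinner]
    ring
  have hDF : (2 * σ₂ + 2 * α * lam) * σ₂ ^ 2 = α * ‖f‖ ^ 2 := by
    rw [← hroot]; field_simp
  have hd1 : deriv (fun t : ℝ =>
        α / 2 * (‖σ₂⁻¹ • f + t • z‖ ^ 2 / 2 - lam) ^ 2 - ⟪f, σ₂⁻¹ • f + t • z⟫) 0 = 0 := by
    rw [hfun, (myPolyDeriv (α/2) (σ₂/α) (σ₂⁻¹ * ⟪f, z⟫) (‖z‖^2/2) (σ₂⁻¹ * ‖f‖^2) ⟪f, z⟫ 0).deriv]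
    generalize (⟪f, z⟫ : ℝ) = E
    field_simp
    ring
  have hKeq : 2 * (α/2) * ((σ₂⁻¹ * ⟪f, z⟫) * (σ₂⁻¹ * ⟪f, z⟫) + (σ₂/α) * (2 * (‖z‖^2/2)))
      = ‖z‖ ^ 2 * ((2 * σ₂ + 2 * α * lam) * (⟪f, z⟫ / (‖f‖ * ‖z‖)) ^ 2 + σ₂) := by
    rw [div_pow, mul_pow]
    generalize (⟪f, z⟫ : ℝ) = E
    field_simp
    linear_combination (-(E ^ 2)) * hDF
  have hd2 : deriv (deriv (fun t : ℝ =>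
        α / 2 * (‖σ₂⁻¹ • f + t • z‖ ^ 2 / 2 - lam) ^ 2 - ⟪f, σ₂⁻¹ • f + t • z⟫)) 0
      = ‖z‖ ^ 2 * ((2 * σ₂ + 2 * α * lam) * (⟪f, z⟫ / (‖f‖ * ‖z‖)) ^ 2 + σ₂) := by
    rw [hfun]
    have hder : deriv (fun t : ℝ =>
          α / 2 * (σ₂ / α + (σ₂⁻¹ * ⟪f, z⟫) * t + (‖z‖ ^ 2 / 2) * t ^ 2) ^ 2
            - (σ₂⁻¹ * ‖f‖ ^ 2 + ⟪f, z⟫ * t))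
        = fun t : ℝ => α/2 * (2 * (σ₂/α + (σ₂⁻¹ * ⟪f, z⟫) * t + (‖z‖^2/2) * t ^ 2)
            * ((σ₂⁻¹ * ⟪f, z⟫) + 2 * (‖z‖^2/2) * t)) - ⟪f, z⟫ := by
      funext t
      exact (myPolyDeriv (α/2) (σ₂/α) (σ₂⁻¹ * ⟪f, z⟫) (‖z‖^2/2) (σ₂⁻¹ * ‖f‖^2) ⟪f, z⟫ t).deriv
    rw [hder, (myPolyDeriv2 (α/2) (σ₂/α) (σ₂⁻¹ * ⟪f, z⟫) (‖z‖^2/2) ⟪f, z⟫ 0).deriv, ← hKeq]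
    ring
  obtain ⟨G, hG⟩ : ∃ G : ℝ → ℝ, G = fun t => α/2 * ((σ₂⁻¹ * ⟪f, z⟫) ^ 2 + (σ₂/α) * ‖z‖ ^ 2)
      + (α * (σ₂⁻¹ * ⟪f, z⟫) * (‖z‖ ^ 2 / 2)) * t + (α/2 * (‖z‖ ^ 2 / 2) ^ 2) * t ^ 2 := ⟨_, rfl⟩
  have hGcont : Continuous G := by rw [hG]; fun_prop
  have h2pqr : α * (σ₂ / α) * (σ₂⁻¹ * ⟪f, z⟫) = ⟪f, z⟫ := by field_simp
  have hval0 : α / 2 * (‖σ₂⁻¹ • f‖ ^ 2 / 2 - lam) ^ 2 - ⟪f, σ₂⁻¹ • f⟫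
      = α / 2 * (σ₂ / α) ^ 2 - σ₂⁻¹ * ‖f‖ ^ 2 := by
    rw [hq, real_inner_smul_right, real_inner_self_eq_norm_sq]
  have hdiff : ∀ t : ℝ,
      α / 2 * (‖σ₂⁻¹ • f + t • z‖ ^ 2 / 2 - lam) ^ 2 - ⟪f, σ₂⁻¹ • f + t • z⟫
      = (α / 2 * (‖σ₂⁻¹ • f‖ ^ 2 / 2 - lam) ^ 2 - ⟪f, σ₂⁻¹ • f⟫) + t ^ 2 * G t := by
    intro t
    rw [congrFun hfun t, hval0, hG]
    simp only []
    linear_combination t * h2pqr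
  have hG0 : 2 * G 0
      = ‖z‖ ^ 2 * ((2 * σ₂ + 2 * α * lam) * (⟪f, z⟫ / (‖f‖ * ‖z‖)) ^ 2 + σ₂) := by
    rw [hG, ← hKeq]; ring
  refine ⟨hd1, hd2, ?_, ?_⟩
  · intro hcos
    have hKneg : G 0 < 0 := by
      have h5 : (2 * σ₂ + 2 * α * lam) * (⟪f, z⟫ / (‖f‖ * ‖z‖)) ^ 2 < -σ₂ := by
        rw [lt_div_iff₀ hD] at hcos; linarith
      have h6 : ‖z‖ ^ 2 * ((2 * σ₂ + 2 * α * lam) * (⟪f, z⟫ / (‖f‖ * ‖z‖)) ^ 2 + σ₂) < 0 :=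
        mul_neg_of_pos_of_neg hzpos (by linarith)
      linarith
    have hev : ∀ᶠ t in nhds (0 : ℝ), G t < 0 :=
      ContinuousAt.eventually_lt hGcont.continuousAt continuousAt_const hKneg
    rw [Metric.eventually_nhds_iff] at hev
    obtain ⟨ε, hε, hball⟩ := hev
    refine ⟨ε, hε, fun t ht htε => ?_⟩
    have hGt : G t < 0 := hball (by simpa [Real.dist_eq] using htε)
    have ht2 : 0 < t ^ 2 := by positivity
    rw [hdiff t]
    have := mul_neg_of_pos_of_neg ht2 hGt
    linarith
  · intro hcos
    have hKpos : 0 < G 0 := by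
      have h5 : -σ₂ < (2 * σ₂ + 2 * α * lam) * (⟪f, z⟫ / (‖f‖ * ‖z‖)) ^ 2 := by
        rw [gt_iff_lt, div_lt_iff₀ hD] at hcos; linarith
      have h6 : 0 < ‖z‖ ^ 2 * ((2 * σ₂ + 2 * α * lam) * (⟪f, z⟫ / (‖f‖ * ‖z‖)) ^ 2 + σ₂) :=
        mul_pos hzpos (by linarith)
      linarith
    have hev : ∀ᶠ t in nhds (0 : ℝ), 0 < G t :=
      ContinuousAt.eventually_lt continuousAt_const hGcont.continuousAt hKpos
    rw [Metric.eventually_nhds_iff] at hev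
    obtain ⟨ε, hε, hball⟩ := hev
    refine ⟨ε, hε, fun t ht htε => ?_⟩
    have hGt : 0 < G t := hball (by simpa [Real.dist_eq] using htε)
    have ht2 : 0 < t ^ 2 := by positivity
    rw [hdiff t]
    have := mul_pos ht2 hGt
    linarith
end Aux

set_option maxHeartbeats 1000000 in
/-- Let `σ₂` be a root of `2σ²(σ/α + λ) = ‖f‖²` with `−2αλ/3 < σ₂ < 0`,
`x₂ = f/σ₂`, `z ≠ 0`, and `φ(t) = Π(x₂ + t z)`. Then `φ'(0) = 0` and
`φ''(0) = ‖z‖²((2σ₂ + 2αλ)cos²θ + σ₂)` with `cosθ = ⟪f,z⟫/(‖f‖‖z‖)`; if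
`cos²θ < −σ₂/(2σ₂ + 2αλ)` then `0` is a strict local maximizer of `φ`, and if
`cos²θ > −σ₂/(2σ₂ + 2αλ)` then `0` is a strict local minimizer; in particular
(for `n ≥ 2`) `x₂` is a saddle point of `Π`. -/
theorem stmt_15 (n : ℕ) (α lam : ℝ) (hα : 0 < α) (hlam : 0 < lam)
    (f : EuclideanSpace ℝ (Fin n)) (hf : f ≠ 0)
    (hfs : 0 < ‖f‖ ^ 2) (hfs' : ‖f‖ ^ 2 < 8 * α ^ 2 * lam ^ 3 / 27)
    (σ₂ : ℝ) (hroot : 2 * σ₂ ^ 2 * (σ₂ / α + lam) = ‖f‖ ^ 2)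
    (h₁ : -2 * α * lam / 3 < σ₂) (h₂ : σ₂ < 0)
    (z : EuclideanSpace ℝ (Fin n)) (hz : z ≠ 0) :
    deriv (fun t : ℝ =>
        α / 2 * (‖σ₂⁻¹ • f + t • z‖ ^ 2 / 2 - lam) ^ 2 - ⟪f, σ₂⁻¹ • f + t • z⟫) 0 = 0 ∧
    deriv (deriv (fun t : ℝ =>
        α / 2 * (‖σ₂⁻¹ • f + t • z‖ ^ 2 / 2 - lam) ^ 2 - ⟪f, σ₂⁻¹ • f + t • z⟫)) 0
      = ‖z‖ ^ 2 * ((2 * σ₂ + 2 * α * lam) * (⟪f, z⟫ / (‖f‖ * ‖z‖)) ^ 2 + σ₂) ∧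
    ((⟪f, z⟫ / (‖f‖ * ‖z‖)) ^ 2 < -σ₂ / (2 * σ₂ + 2 * α * lam) →
      ∃ ε > 0, ∀ t : ℝ, t ≠ 0 → |t| < ε →
        α / 2 * (‖σ₂⁻¹ • f + t • z‖ ^ 2 / 2 - lam) ^ 2 - ⟪f, σ₂⁻¹ • f + t • z⟫
          < α / 2 * (‖σ₂⁻¹ • f‖ ^ 2 / 2 - lam) ^ 2 - ⟪f, σ₂⁻¹ • f⟫) ∧
    ((⟪f, z⟫ / (‖f‖ * ‖z‖)) ^ 2 > -σ₂ / (2 * σ₂ + 2 * α * lam) →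
      ∃ ε > 0, ∀ t : ℝ, t ≠ 0 → |t| < ε →
        α / 2 * (‖σ₂⁻¹ • f‖ ^ 2 / 2 - lam) ^ 2 - ⟪f, σ₂⁻¹ • f⟫
          < α / 2 * (‖σ₂⁻¹ • f + t • z‖ ^ 2 / 2 - lam) ^ 2 - ⟪f, σ₂⁻¹ • f + t • z⟫) ∧
    (2 ≤ n →
      ¬ IsLocalMax (fun x : EuclideanSpace ℝ (Fin n) =>
          α / 2 * (‖x‖ ^ 2 / 2 - lam) ^ 2 - ⟪f, x⟫) (σ₂⁻¹ • f) ∧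
      ¬ IsLocalMin (fun x : EuclideanSpace ℝ (Fin n) =>
          α / 2 * (‖x‖ ^ 2 / 2 - lam) ^ 2 - ⟪f, x⟫) (σ₂⁻¹ • f)) := by
  obtain ⟨hd1, hd2, hmaxb, hminb⟩ := aux_all α lam f z σ₂ hα hlam hf hroot h₁ h₂ hz
  refine ⟨hd1, hd2, hmaxb, hminb, ?_⟩
  intro hn
  have hfn : ‖f‖ ≠ 0 := norm_ne_zero_iff.2 hf
  have hfpos : 0 < ‖f‖ := norm_pos_iff.2 hf
  have hD : 0 < 2 * σ₂ + 2 * α * lam := by nlinarith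
  constructor
  · -- not a local max: use direction z = f
    intro hmax
    obtain ⟨_, _, _, hmin'⟩ := aux_all α lam f f σ₂ hα hlam hf hroot h₁ h₂ hf
    have hcos1 : (⟪f, f⟫ / (‖f‖ * ‖f‖) : ℝ) = 1 := by
      rw [real_inner_self_eq_norm_mul_norm, div_self (mul_ne_zero hfn hfn)]
    obtain ⟨ε, hε, hlt⟩ := hmin' (by
      rw [hcos1, one_pow, gt_iff_lt, div_lt_one hD]; linarith)
    obtain ⟨δ, hδ, hb⟩ := Metric.eventually_nhds_iff.mp hmax
    set t0 : ℝ := min (ε / 2) (δ / (2 * ‖f‖)) with ht0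
    have ht0pos : 0 < t0 := lt_min (by linarith) (by positivity)
    have ht0ε : |t0| < ε := by
      rw [abs_of_pos ht0pos]
      calc t0 ≤ ε / 2 := min_le_left _ _
        _ < ε := by linarith
    have hdist : dist (σ₂⁻¹ • f + t0 • f) (σ₂⁻¹ • f) < δ := by
      rw [dist_eq_norm, add_sub_cancel_left, norm_smul, Real.norm_eq_abs,
        abs_of_pos ht0pos]
      have h7 : t0 ≤ δ / (2 * ‖f‖) := min_le_right _ _
      have h8 : t0 * ‖f‖ ≤ δ / (2 * ‖f‖) * ‖f‖ :=
        mul_le_mul_of_nonneg_right h7 (le_of_lt hfpos)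
      have h9 : δ / (2 * ‖f‖) * ‖f‖ = δ / 2 := by field_simp
      linarith
    have hle := hb hdist
    have hgt := hlt t0 (ne_of_gt ht0pos) ht0ε
    simp only at hle
    linarith
  · -- not a local min: use orthogonal direction
    intro hmin
    have hspan : (Submodule.span ℝ {f})ᗮ ≠ ⊥ := by
      intro hbot
      have htop := Submodule.orthogonal_eq_bot_iff.mp hbot
      have h1 := finrank_span_singleton (K := ℝ) hf
      rw [htop, finrank_top ℝ (EuclideanSpace ℝ (Fin n)), finrank_euclideanSpace_fin] at h1
      omega
    obtain ⟨w, hwmem, hw0⟩ := Submodule.exists_mem_ne_zero_of_ne_bot hspan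
    have hfw : ⟪f, w⟫ = 0 :=
      (Submodule.mem_orthogonal _ _).mp hwmem f (Submodule.mem_span_singleton_self f)
    have hwpos : 0 < ‖w‖ := norm_pos_iff.2 hw0
    obtain ⟨_, _, hmax', _⟩ := aux_all α lam f w σ₂ hα hlam hf hroot h₁ h₂ hw0
    obtain ⟨ε, hε, hlt⟩ := hmax' (by
      rw [hfw, zero_div]
      simpa using div_pos (neg_pos.2 h₂) hD)
    obtain ⟨δ, hδ, hb⟩ := Metric.eventually_nhds_iff.mp hmin
    set t0 : ℝ := min (ε / 2) (δ / (2 * ‖w‖)) with ht0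
    have ht0pos : 0 < t0 := lt_min (by linarith) (by positivity)
    have ht0ε : |t0| < ε := by
      rw [abs_of_pos ht0pos]
      calc t0 ≤ ε / 2 := min_le_left _ _
        _ < ε := by linarith
    have hdist : dist (σ₂⁻¹ • f + t0 • w) (σ₂⁻¹ • f) < δ := by
      rw [dist_eq_norm, add_sub_cancel_left, norm_smul, Real.norm_eq_abs,
        abs_of_pos ht0pos]
      have h7 : t0 ≤ δ / (2 * ‖w‖) := min_le_right _ _
      have h8 : t0 * ‖w‖ ≤ δ / (2 * ‖w‖) * ‖w‖ :=
        mul_le_mul_of_nonneg_right h7 (le_of_lt hwpos)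
      have h9 : δ / (2 * ‖w‖) * ‖w‖ = δ / 2 := by field_simp
      linarith
    have hle := hb hdist
    have hgt := hlt t0 (ne_of_gt ht0pos) ht0ε
    simp only at hle
    linarith
end

section
/- If |f|² = 8α²λ³/27 and σ₂ = −2αλ/3 (the double root of the cubic), then x₂ = f/σ₂ satisfies zᵀ∇²Π(x₂)z ≤ 0 for all z ∈ ℝⁿ, i.e., the Hessian of Π at x₂ is negative semidefinite. -/
open RealInnerProductSpace

/-- If `‖f‖² = 8α²λ³/27` and `σ₂ = −2αλ/3`, then `x₂ = f/σ₂` satisfies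
`zᵀ∇²Π(x₂)z = α(⟪x₂,z⟫² + (‖x₂‖²/2 − λ)‖z‖²) ≤ 0` for all `z`. -/
theorem stmt_16 (n : ℕ) (α lam : ℝ) (hα : 0 < α) (hlam : 0 < lam)
    (f : EuclideanSpace ℝ (Fin n)) (hf : ‖f‖ ^ 2 = 8 * α ^ 2 * lam ^ 3 / 27) :
    ∀ z : EuclideanSpace ℝ (Fin n),
      α * (⟪(-2 * α * lam / 3 : ℝ)⁻¹ • f, z⟫ ^ 2
        + (‖(-2 * α * lam / 3 : ℝ)⁻¹ • f‖ ^ 2 / 2 - lam) * ‖z‖ ^ 2) ≤ 0 := by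
  intro z
  set σ : ℝ := -2 * α * lam / 3 with hσ
  have hσne : σ ≠ 0 := by
    simp only [hσ]
    intro h
    nlinarith [mul_pos hα hlam]
  set x : EuclideanSpace ℝ (Fin n) := σ⁻¹ • f with hx
  have hnx : ‖x‖ ^ 2 = 2 * lam / 3 := by
    rw [hx, norm_smul, mul_pow, hf]
    rw [norm_inv, Real.norm_eq_abs]
    rw [inv_pow, sq_abs, hσ]
    have h1 : α ≠ 0 := ne_of_gt hα
    have h2 : lam ≠ 0 := ne_of_gt hlam
    field_simp
    ring
  have hcs : ⟪x, z⟫ ^ 2 ≤ ‖x‖ ^ 2 * ‖z‖ ^ 2 := by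
    have := abs_real_inner_le_norm x z
    nlinarith [abs_nonneg (⟪x, z⟫), sq_abs (⟪x, z⟫)]
  have : ⟪x, z⟫ ^ 2 + (‖x‖ ^ 2 / 2 - lam) * ‖z‖ ^ 2 ≤ 0 := by
    rw [hnx]; nlinarith
  nlinarith
end

section
/- Perturbation convergence: fix f₀ ∈ ℝⁿ with 0 < |f₀|² < 8α²λ³/27 and set f_k = f₀/k for k ∈ ℕ. Let σ_{1,k} > 0 > σ_{2,k} > −2αλ/3 > σ_{3,k} > −αλ be the three real roots of 2σ²(σ/α + λ) = |f_k|² and x_{i,k} = f_k/σ_{i,k}. Then x_{1,k} → √(2λ)·f₀/|f₀|, x_{2,k} → −√(2λ)·f₀/|f₀|, and x_{3,k} → 0 as k → ∞. In particular the limits of x_{1,k} and x_{2,k} are global minimizers of W(x) = (α/2)(|x|²/2 − λ)². -/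
open Filter

set_option maxHeartbeats 1600000 in
/-- Perturbation convergence: with `f_k = f₀/k` and the three ordered real
roots `σ_{1,k} > 0 > σ_{2,k} > −2αλ/3 > σ_{3,k} > −αλ` of
`2σ²(σ/α + λ) = ‖f_k‖²`, the corresponding points `x_{i,k} = f_k/σ_{i,k}`
satisfy `x_{1,k} → √(2λ) f₀/‖f₀‖`, `x_{2,k} → −√(2λ) f₀/‖f₀‖`, `x_{3,k} → 0`;
moreover the limits of `x_{1,k}` and `x_{2,k}` are global minimizers of
`W(x) = (α/2)(‖x‖²/2 − λ)²`. -/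
theorem stmt_18 (n : ℕ) (α lam : ℝ) (hα : 0 < α) (hlam : 0 < lam)
    (f₀ : EuclideanSpace ℝ (Fin n))
    (hf₀ : 0 < ‖f₀‖ ^ 2) (hf₀' : ‖f₀‖ ^ 2 < 8 * α ^ 2 * lam ^ 3 / 27)
    (σ₁ σ₂ σ₃ : ℕ → ℝ)
    (hord : ∀ k : ℕ, 1 ≤ k →
      σ₁ k > 0 ∧ 0 > σ₂ k ∧ σ₂ k > -2 * α * lam / 3 ∧
      -2 * α * lam / 3 > σ₃ k ∧ σ₃ k > -α * lam)
    (hroot : ∀ k : ℕ, 1 ≤ k →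
      2 * (σ₁ k) ^ 2 * (σ₁ k / α + lam) = ‖(k : ℝ)⁻¹ • f₀‖ ^ 2 ∧
      2 * (σ₂ k) ^ 2 * (σ₂ k / α + lam) = ‖(k : ℝ)⁻¹ • f₀‖ ^ 2 ∧
      2 * (σ₃ k) ^ 2 * (σ₃ k / α + lam) = ‖(k : ℝ)⁻¹ • f₀‖ ^ 2) :
    Tendsto (fun k : ℕ => (σ₁ k)⁻¹ • ((k : ℝ)⁻¹ • f₀)) atTop
      (nhds ((Real.sqrt (2 * lam) / ‖f₀‖) • f₀)) ∧
    Tendsto (fun k : ℕ => (σ₂ k)⁻¹ • ((k : ℝ)⁻¹ • f₀)) atTop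
      (nhds ((-(Real.sqrt (2 * lam)) / ‖f₀‖) • f₀)) ∧
    Tendsto (fun k : ℕ => (σ₃ k)⁻¹ • ((k : ℝ)⁻¹ • f₀)) atTop (nhds 0) ∧
    (∀ x : EuclideanSpace ℝ (Fin n),
      α / 2 * (‖(Real.sqrt (2 * lam) / ‖f₀‖) • f₀‖ ^ 2 / 2 - lam) ^ 2
        ≤ α / 2 * (‖x‖ ^ 2 / 2 - lam) ^ 2) ∧
    (∀ x : EuclideanSpace ℝ (Fin n),
      α / 2 * (‖(-(Real.sqrt (2 * lam)) / ‖f₀‖) • f₀‖ ^ 2 / 2 - lam) ^ 2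
        ≤ α / 2 * (‖x‖ ^ 2 / 2 - lam) ^ 2) := by
  have hn : 0 < ‖f₀‖ := by nlinarith [norm_nonneg f₀]
  have hsq : ∀ k : ℕ, ‖(k : ℝ)⁻¹ • f₀‖ ^ 2 = ((k : ℝ)⁻¹) ^ 2 * ‖f₀‖ ^ 2 := by
    intro k
    rw [norm_smul, Real.norm_eq_abs, mul_pow, sq_abs]
  -- generic: σ tends to 0
  have key : ∀ σ : ℕ → ℝ,
      (∀ k : ℕ, 1 ≤ k → lam / 3 ≤ σ k / α + lam) →
      (∀ k : ℕ, 1 ≤ k → 2 * (σ k) ^ 2 * (σ k / α + lam) = ‖(k : ℝ)⁻¹ • f₀‖ ^ 2) →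
      Tendsto σ atTop (nhds 0) := by
    intro σ hge heq
    have hg : Tendsto (fun k : ℕ => Real.sqrt (3 * ‖f₀‖ ^ 2 / (2 * lam)) / k) atTop
        (nhds 0) := tendsto_const_div_atTop_nhds_zero_nat _
    apply squeeze_zero_norm' _ hg
    · filter_upwards [eventually_ge_atTop 1] with k hk
      have hk0 : (0:ℝ) < k := by exact_mod_cast hk
      have h1 := hge k hk
      have h2 := heq k hk
      rw [hsq k] at h2
      have hkinv : ((k:ℝ)⁻¹) ^ 2 = 1 / k ^ 2 := by
        rw [inv_pow, one_div]
      rw [hkinv] at h2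
      have hb : σ k ^ 2 ≤ 3 * ‖f₀‖ ^ 2 / (2 * lam) / k ^ 2 := by
        have h2' : 2 * σ k ^ 2 * (σ k / α + lam) * (k:ℝ) ^ 2 = ‖f₀‖ ^ 2 := by
          rw [h2]; field_simp
        rw [div_div, le_div_iff₀ (by positivity)]
        nlinarith [mul_le_mul_of_nonneg_left h1
          (mul_nonneg (sq_nonneg (σ k)) (sq_nonneg (k:ℝ)))]
      calc ‖σ k‖ = Real.sqrt (σ k ^ 2) := by
            rw [Real.sqrt_sq_eq_abs, Real.norm_eq_abs]
        _ ≤ Real.sqrt (3 * ‖f₀‖ ^ 2 / (2 * lam) / k ^ 2) := Real.sqrt_le_sqrt hb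
        _ = Real.sqrt (3 * ‖f₀‖ ^ 2 / (2 * lam)) / k := by
            rw [Real.sqrt_div (by positivity), Real.sqrt_sq hk0.le]
  have hkey1 : Tendsto σ₁ atTop (nhds 0) := by
    apply key σ₁ _ (fun k hk => (hroot k hk).1)
    intro k hk
    have h1 := (hord k hk).1
    have : 0 < σ₁ k / α := div_pos h1 hα
    linarith
  have hkey2 : Tendsto σ₂ atTop (nhds 0) := by
    apply key σ₂ _ (fun k hk => (hroot k hk).2.1)
    intro k hk
    obtain ⟨-, -, h2, -, -⟩ := hord k hk
    have h : -(2 * lam / 3) ≤ σ₂ k / α := by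
      rw [le_div_iff₀ hα]; nlinarith
    linarith
  -- limit function for the sqrt expression
  have sqrtlim : ∀ σ : ℕ → ℝ, Tendsto σ atTop (nhds 0) →
      Tendsto (fun k => Real.sqrt (2 * (σ k / α + lam)) / ‖f₀‖) atTop
        (nhds (Real.sqrt (2 * lam) / ‖f₀‖)) := by
    intro σ hσ
    have : Tendsto (fun k => 2 * (σ k / α + lam)) atTop (nhds (2 * ((0:ℝ) / α + lam))) :=
      (((hσ.div_const α).add_const lam).const_mul 2)
    have h := this.sqrt.div_const ‖f₀‖
    simpa using h
  -- case 1
  have t1 : Tendsto (fun k : ℕ => (σ₁ k)⁻¹ • ((k : ℝ)⁻¹ • f₀)) atTop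
      (nhds ((Real.sqrt (2 * lam) / ‖f₀‖) • f₀)) := by
    have hc : Tendsto (fun k : ℕ => (σ₁ k)⁻¹ * (k : ℝ)⁻¹) atTop
        (nhds (Real.sqrt (2 * lam) / ‖f₀‖)) := by
      apply Tendsto.congr' _ (sqrtlim σ₁ hkey1)
      filter_upwards [eventually_ge_atTop 1] with k hk
      have hk0 : (0:ℝ) < k := by exact_mod_cast hk
      have h1 := (hord k hk).1
      have heq := (hroot k hk).1
      rw [hsq k] at heq
      have hcpos : 0 < (σ₁ k)⁻¹ * (k : ℝ)⁻¹ := by positivity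
      have hc2 : ((σ₁ k)⁻¹ * (k : ℝ)⁻¹) ^ 2 = 2 * (σ₁ k / α + lam) / ‖f₀‖ ^ 2 := by
        field_simp
        field_simp at heq
        nlinarith [heq]
      rw [← Real.sqrt_sq hcpos.le, hc2, Real.sqrt_div (by positivity),
        Real.sqrt_sq hn.le]
    have : (fun k : ℕ => (σ₁ k)⁻¹ • ((k : ℝ)⁻¹ • f₀))
        = fun k : ℕ => ((σ₁ k)⁻¹ * (k : ℝ)⁻¹) • f₀ := by
      funext k; rw [smul_smul]
    rw [this]
    exact hc.smul_const f₀
  -- case 2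
  have t2 : Tendsto (fun k : ℕ => (σ₂ k)⁻¹ • ((k : ℝ)⁻¹ • f₀)) atTop
      (nhds ((-(Real.sqrt (2 * lam)) / ‖f₀‖) • f₀)) := by
    have hc : Tendsto (fun k : ℕ => (σ₂ k)⁻¹ * (k : ℝ)⁻¹) atTop
        (nhds (-(Real.sqrt (2 * lam)) / ‖f₀‖)) := by
      have hlim := (sqrtlim σ₂ hkey2).neg
      rw [← neg_div] at hlim
      apply Tendsto.congr' _ hlim
      filter_upwards [eventually_ge_atTop 1] with k hk
      have hk0 : (0:ℝ) < k := by exact_mod_cast hk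
      have h1 := (hord k hk).2.1
      have h2b := (hord k hk).2.2.1
      have hx : (0:ℝ) ≤ 2 * (σ₂ k / α + lam) := by
        have h : -(2 * lam / 3) ≤ σ₂ k / α := by
          rw [le_div_iff₀ hα]; nlinarith
        linarith
      have heq := (hroot k hk).2.1
      rw [hsq k] at heq
      have hσne : σ₂ k ≠ 0 := ne_of_lt h1
      have hcneg : (σ₂ k)⁻¹ * (k : ℝ)⁻¹ < 0 :=
        mul_neg_of_neg_of_pos (inv_neg''.2 h1) (by positivity)
      have hc2 : ((σ₂ k)⁻¹ * (k : ℝ)⁻¹) ^ 2 = 2 * (σ₂ k / α + lam) / ‖f₀‖ ^ 2 := by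
        field_simp
        field_simp at heq
        nlinarith [heq]
      have : Real.sqrt (((σ₂ k)⁻¹ * (k : ℝ)⁻¹) ^ 2) = -((σ₂ k)⁻¹ * (k : ℝ)⁻¹) := by
        rw [Real.sqrt_sq_eq_abs, abs_of_neg hcneg]
      rw [eq_comm, ← neg_eq_iff_eq_neg, ← this, hc2, Real.sqrt_div hx,
        Real.sqrt_sq hn.le]
    have : (fun k : ℕ => (σ₂ k)⁻¹ • ((k : ℝ)⁻¹ • f₀))
        = fun k : ℕ => ((σ₂ k)⁻¹ * (k : ℝ)⁻¹) • f₀ := by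
      funext k; rw [smul_smul]
    rw [this]
    exact hc.smul_const f₀
  -- case 3
  have t3 : Tendsto (fun k : ℕ => (σ₃ k)⁻¹ • ((k : ℝ)⁻¹ • f₀)) atTop (nhds 0) := by
    have hc : Tendsto (fun k : ℕ => (σ₃ k)⁻¹ * (k : ℝ)⁻¹) atTop (nhds 0) := by
      have hg : Tendsto (fun k : ℕ => (3 / (2 * α * lam)) / k) atTop (nhds 0) :=
        tendsto_const_div_atTop_nhds_zero_nat _
      apply squeeze_zero_norm' _ hg
      · filter_upwards [eventually_ge_atTop 1] with k hk
        have hk0 : (0:ℝ) < k := by exact_mod_cast hk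
        obtain ⟨-, -, -, h3, -⟩ := hord k hk
        have h3' : 2 * α * lam / 3 < -σ₃ k := by linarith
        have hσpos : 0 < -σ₃ k := lt_trans (by positivity) h3'
        have hσne : σ₃ k < 0 := by linarith
        rw [Real.norm_eq_abs, abs_mul, abs_inv, abs_inv,
          abs_of_neg hσne, abs_of_pos hk0]
        have e1 : (-σ₃ k)⁻¹ * (k:ℝ)⁻¹ = ((-σ₃ k) * k)⁻¹ := (mul_inv _ _).symm
        rw [e1, ← one_div, div_div, div_le_div_iff₀ (mul_pos hσpos hk0) (by positivity)]
        linarith [mul_le_mul_of_nonneg_right h3'.le hk0.le]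
    have : (fun k : ℕ => (σ₃ k)⁻¹ • ((k : ℝ)⁻¹ • f₀))
        = fun k : ℕ => ((σ₃ k)⁻¹ * (k : ℝ)⁻¹) • f₀ := by
      funext k; rw [smul_smul]
    rw [this]
    simpa using hc.smul_const f₀
  -- minimizers
  have hmin : ∀ t : ℝ, t ^ 2 = 2 * lam / ‖f₀‖ ^ 2 →
      ∀ x : EuclideanSpace ℝ (Fin n),
        α / 2 * (‖t • f₀‖ ^ 2 / 2 - lam) ^ 2 ≤ α / 2 * (‖x‖ ^ 2 / 2 - lam) ^ 2 := by
    intro t ht x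
    have h1 : ‖t • f₀‖ ^ 2 = t ^ 2 * ‖f₀‖ ^ 2 := by
      rw [norm_smul, Real.norm_eq_abs, mul_pow, sq_abs]
    have h2 : t ^ 2 * ‖f₀‖ ^ 2 = 2 * lam := by
      rw [ht]; field_simp
    rw [h1, h2]
    have h3 : 2 * lam / 2 - lam = 0 := by ring
    rw [h3]
    simp only [ne_eq, OfNat.ofNat_ne_zero, not_false_eq_true, zero_pow, mul_zero]
    positivity
  refine ⟨t1, t2, t3, hmin _ ?_, hmin _ ?_⟩
  · rw [div_pow, Real.sq_sqrt (by positivity)]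
  · rw [div_pow, neg_pow, Real.sq_sqrt (by positivity)]; ring
end

section
/- Root limits under scaling: with f_k = f₀/k and the ordered roots σ_{1,k} > 0 > σ_{2,k} > −2αλ/3 > σ_{3,k} > −αλ of 2σ²(σ/α + λ) = |f_k|², one has σ_{1,k} → 0, σ_{2,k} → 0, σ_{3,k} → −αλ as k → ∞, and moreover k·σ_{1,k} → |f₀|/√(2λ) and k·σ_{2,k} → −|f₀|/√(2λ). -/
open Filter

set_option maxHeartbeats 1000000

/-- Root limits under scaling: with the ordered roots
`σ_{1,k} > 0 > σ_{2,k} > −2αλ/3 > σ_{3,k} > −αλ` of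
`2σ²(σ/α + λ) = ‖f₀‖²/k²`, one has `σ_{1,k} → 0`, `σ_{2,k} → 0`,
`σ_{3,k} → −αλ`, `k σ_{1,k} → ‖f₀‖/√(2λ)` and `k σ_{2,k} → −‖f₀‖/√(2λ)`. -/
theorem stmt_19 (n : ℕ) (α lam : ℝ) (hα : 0 < α) (hlam : 0 < lam)
    (f₀ : EuclideanSpace ℝ (Fin n))
    (hf₀ : 0 < ‖f₀‖ ^ 2) (hf₀' : ‖f₀‖ ^ 2 < 8 * α ^ 2 * lam ^ 3 / 27)
    (σ₁ σ₂ σ₃ : ℕ → ℝ)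
    (hord : ∀ k : ℕ, 1 ≤ k →
      σ₁ k > 0 ∧ 0 > σ₂ k ∧ σ₂ k > -2 * α * lam / 3 ∧
      -2 * α * lam / 3 > σ₃ k ∧ σ₃ k > -α * lam)
    (hroot : ∀ k : ℕ, 1 ≤ k →
      2 * (σ₁ k) ^ 2 * (σ₁ k / α + lam) = ‖f₀‖ ^ 2 / (k : ℝ) ^ 2 ∧
      2 * (σ₂ k) ^ 2 * (σ₂ k / α + lam) = ‖f₀‖ ^ 2 / (k : ℝ) ^ 2 ∧
      2 * (σ₃ k) ^ 2 * (σ₃ k / α + lam) = ‖f₀‖ ^ 2 / (k : ℝ) ^ 2) :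
    Tendsto σ₁ atTop (nhds 0) ∧
    Tendsto σ₂ atTop (nhds 0) ∧
    Tendsto σ₃ atTop (nhds (-α * lam)) ∧
    Tendsto (fun k : ℕ => (k : ℝ) * σ₁ k) atTop (nhds (‖f₀‖ / Real.sqrt (2 * lam))) ∧
    Tendsto (fun k : ℕ => (k : ℝ) * σ₂ k) atTop (nhds (-‖f₀‖ / Real.sqrt (2 * lam))) := by
  set F := ‖f₀‖ ^ 2 with hF
  have hinv : Tendsto (fun k : ℕ => 1 / (k : ℝ)) atTop (nhds 0) :=
    tendsto_one_div_atTop_nhds_zero_nat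
  have hev : ∀ᶠ k : ℕ in atTop, 1 ≤ k := eventually_ge_atTop 1
  -- bound for σ₁
  have hb1 : ∀ k : ℕ, 1 ≤ k → (k : ℝ) * σ₁ k ≤ Real.sqrt (F / (2 * lam)) := by
    intro k hk
    have hkpos : (0 : ℝ) < k := by exact_mod_cast hk
    obtain ⟨h1, -⟩ := hord k hk
    obtain ⟨e1, -⟩ := hroot k hk
    have e1' : F = 2 * (σ₁ k) ^ 2 * (σ₁ k / α + lam) * (k : ℝ) ^ 2 := by
      field_simp at e1 ⊢; linarith
    have hsq : ((k : ℝ) * σ₁ k) ^ 2 ≤ F / (2 * lam) := by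
      rw [le_div_iff₀ (by positivity)]
      have hnn : (0 : ℝ) ≤ 2 * (σ₁ k) ^ 2 * (k : ℝ) ^ 2 * (σ₁ k / α) := by positivity
      nlinarith [hnn, e1']
    calc (k : ℝ) * σ₁ k = Real.sqrt (((k : ℝ) * σ₁ k) ^ 2) :=
          (Real.sqrt_sq (by positivity)).symm
      _ ≤ Real.sqrt (F / (2 * lam)) := Real.sqrt_le_sqrt hsq
  -- bound for σ₂
  have hb2 : ∀ k : ℕ, 1 ≤ k → (k : ℝ) * (-σ₂ k) ≤ Real.sqrt (3 * F / (2 * lam)) := by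
    intro k hk
    have hkpos : (0 : ℝ) < k := by exact_mod_cast hk
    obtain ⟨-, h2, h2', -⟩ := hord k hk
    obtain ⟨-, e2, -⟩ := hroot k hk
    have e2' : F = 2 * (σ₂ k) ^ 2 * (σ₂ k / α + lam) * (k : ℝ) ^ 2 := by
      field_simp at e2 ⊢; linarith
    have ht : lam / 3 ≤ σ₂ k / α + lam := by
      have : -2 * lam / 3 < σ₂ k / α := by
        rw [lt_div_iff₀ hα]; nlinarith
      linarith
    have hsq : ((k : ℝ) * (-σ₂ k)) ^ 2 ≤ 3 * F / (2 * lam) := by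
      rw [le_div_iff₀ (by positivity)]
      have key := mul_le_mul_of_nonneg_left ht
        (show (0 : ℝ) ≤ 6 * (σ₂ k) ^ 2 * (k : ℝ) ^ 2 by positivity)
      nlinarith [key, e2']
    calc (k : ℝ) * (-σ₂ k) = Real.sqrt (((k : ℝ) * (-σ₂ k)) ^ 2) :=
          (Real.sqrt_sq (by nlinarith)).symm
      _ ≤ Real.sqrt (3 * F / (2 * lam)) := Real.sqrt_le_sqrt hsq
  -- σ₁ → 0
  have t1 : Tendsto σ₁ atTop (nhds 0) := by
    apply squeeze_zero' (g := fun k : ℕ => Real.sqrt (F / (2 * lam)) * (1 / k))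
      (hev.mono fun k hk => (hord k hk).1.le) (hev.mono ?_) ?_
    · intro k hk
      have hkpos : (0 : ℝ) < k := by exact_mod_cast hk
      have := hb1 k hk
      calc σ₁ k = (k : ℝ) * σ₁ k * (1 / k) := by field_simp
        _ ≤ Real.sqrt (F / (2 * lam)) * (1 / k) :=
          mul_le_mul_of_nonneg_right this (by positivity)
    · have := (tendsto_const_nhds (x := Real.sqrt (F / (2 * lam)))).mul hinv
      simpa using this
  -- σ₂ → 0
  have t2 : Tendsto σ₂ atTop (nhds 0) := by
    have : Tendsto (fun k => -σ₂ k) atTop (nhds 0) := by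
      apply squeeze_zero' (g := fun k : ℕ => Real.sqrt (3 * F / (2 * lam)) * (1 / k))
        (hev.mono fun k hk => by linarith [(hord k hk).2.1]) (hev.mono ?_) ?_
      · intro k hk
        have hkpos : (0 : ℝ) < k := by exact_mod_cast hk
        have := hb2 k hk
        calc -σ₂ k = (k : ℝ) * (-σ₂ k) * (1 / k) := by field_simp
          _ ≤ Real.sqrt (3 * F / (2 * lam)) * (1 / k) :=
            mul_le_mul_of_nonneg_right this (by positivity)
      · have := (tendsto_const_nhds (x := Real.sqrt (3 * F / (2 * lam)))).mul hinv
        simpa using this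
    have := this.neg
    simpa using this
  -- σ₃ → -αλ
  have t3 : Tendsto σ₃ atTop (nhds (-α * lam)) := by
    have hup : ∀ k : ℕ, 1 ≤ k → σ₃ k ≤ -α * lam + 9 * F / (8 * α * lam ^ 2) * (1 / k) := by
      intro k hk
      have hkpos : (0 : ℝ) < k := by exact_mod_cast hk
      have hk1 : (1 : ℝ) ≤ k := by exact_mod_cast hk
      obtain ⟨-, -, -, h3, h3'⟩ := hord k hk
      obtain ⟨-, -, e3⟩ := hroot k hk
      have e3' : F = 2 * (σ₃ k) ^ 2 * (σ₃ k / α + lam) * (k : ℝ) ^ 2 := by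
        field_simp at e3 ⊢; linarith
      have hu : 0 < σ₃ k / α + lam := by
        have : -lam < σ₃ k / α := by rw [lt_div_iff₀ hα]; nlinarith
        linarith
      have hσsq : (2 * α * lam / 3) ^ 2 ≤ (σ₃ k) ^ 2 := by nlinarith
      -- F ≥ 2 (2αλ/3)² (σ₃/α+λ) k²
      have key : 2 * (2 * α * lam / 3) ^ 2 * (σ₃ k / α + lam) * (k : ℝ) ^ 2 ≤ F := by
        rw [e3']
        gcongr
      -- so σ₃/α + λ ≤ 9F/(8α²λ²k²) ≤ 9F/(8α²λ²) · (1/k)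
      have hkk : (k : ℝ) ≤ (k : ℝ) ^ 2 := by nlinarith [mul_nonneg (by linarith : (0:ℝ) ≤ (k:ℝ) - 1) hkpos.le]
      have hCk : (σ₃ k / α + lam) * (k : ℝ) ≤ 9 * F / (8 * α ^ 2 * lam ^ 2) := by
        rw [le_div_iff₀ (by positivity)]
        have h2 := mul_le_mul_of_nonneg_left
          (mul_le_mul_of_nonneg_left hkk hu.le)
          (show (0:ℝ) ≤ 8 * α ^ 2 * lam ^ 2 by positivity)
        nlinarith [h2, key]
      have hub : σ₃ k / α + lam ≤ 9 * F / (8 * α ^ 2 * lam ^ 2) * (1 / k) := by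
        rw [mul_one_div, le_div_iff₀ hkpos]
        exact hCk
      have := mul_le_mul_of_nonneg_left hub hα.le
      calc σ₃ k = α * (σ₃ k / α + lam) - α * lam := by field_simp; ring
        _ ≤ α * (9 * F / (8 * α ^ 2 * lam ^ 2) * (1 / k)) - α * lam := by linarith
        _ = -α * lam + 9 * F / (8 * α * lam ^ 2) * (1 / k) := by
          field_simp; ring
    apply tendsto_of_tendsto_of_tendsto_of_le_of_le'
      (tendsto_const_nhds (x := -α * lam))
      (show Tendsto (fun k : ℕ => -α * lam + 9 * F / (8 * α * lam ^ 2) * (1 / k)) atTop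
          (nhds (-α * lam)) by
        have := (tendsto_const_nhds (x := -α * lam)).add
          ((tendsto_const_nhds (x := 9 * F / (8 * α * lam ^ 2))).mul hinv)
        simpa using this)
      (hev.mono fun k hk => (hord k hk).2.2.2.2.le)
      (hev.mono fun k hk => hup k hk)
  -- the scaled limits
  have hsqrtF : Real.sqrt (F / (2 * lam)) = ‖f₀‖ / Real.sqrt (2 * lam) := by
    rw [hF, Real.sqrt_div (sq_nonneg _), Real.sqrt_sq (norm_nonneg _)]
  have ht1den : Tendsto (fun k : ℕ => F / (2 * (σ₁ k / α + lam))) atTop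
      (nhds (F / (2 * lam))) := by
    have : Tendsto (fun k : ℕ => 2 * (σ₁ k / α + lam)) atTop (nhds (2 * lam)) := by
      have := (tendsto_const_nhds (x := (2:ℝ))).mul
        (((t1.div_const α)).add (tendsto_const_nhds (x := lam)))
      simpa using this
    exact tendsto_const_nhds.div this (by positivity)
  have ht2den : Tendsto (fun k : ℕ => F / (2 * (σ₂ k / α + lam))) atTop
      (nhds (F / (2 * lam))) := by
    have : Tendsto (fun k : ℕ => 2 * (σ₂ k / α + lam)) atTop (nhds (2 * lam)) := by
      have := (tendsto_const_nhds (x := (2:ℝ))).mul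
        (((t2.div_const α)).add (tendsto_const_nhds (x := lam)))
      simpa using this
    exact tendsto_const_nhds.div this (by positivity)
  have t4 : Tendsto (fun k : ℕ => (k : ℝ) * σ₁ k) atTop
      (nhds (‖f₀‖ / Real.sqrt (2 * lam))) := by
    have heq : ∀ᶠ k : ℕ in atTop,
        Real.sqrt (F / (2 * (σ₁ k / α + lam))) = (k : ℝ) * σ₁ k := by
      refine hev.mono fun k hk => ?_
      have hkpos : (0 : ℝ) < k := by exact_mod_cast hk
      obtain ⟨h1, -⟩ := hord k hk
      obtain ⟨e1, -⟩ := hroot k hk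
      have hu : 0 < σ₁ k / α + lam := by positivity
      have : F / (2 * (σ₁ k / α + lam)) = ((k : ℝ) * σ₁ k) ^ 2 := by
        rw [div_eq_iff (by positivity)]
        field_simp at e1 ⊢
        nlinarith [e1]
      rw [this, Real.sqrt_sq (by positivity)]
    have := ht1den.sqrt
    rw [hsqrtF] at this
    exact this.congr' heq
  have t5 : Tendsto (fun k : ℕ => (k : ℝ) * σ₂ k) atTop
      (nhds (-‖f₀‖ / Real.sqrt (2 * lam))) := by
    have heq : ∀ᶠ k : ℕ in atTop,
        -Real.sqrt (F / (2 * (σ₂ k / α + lam))) = (k : ℝ) * σ₂ k := by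
      refine hev.mono fun k hk => ?_
      have hkpos : (0 : ℝ) < k := by exact_mod_cast hk
      obtain ⟨-, h2, h2', -⟩ := hord k hk
      obtain ⟨-, e2, -⟩ := hroot k hk
      have hu : 0 < σ₂ k / α + lam := by
        have : -2 * lam / 3 < σ₂ k / α := by rw [lt_div_iff₀ hα]; nlinarith
        linarith
      have : F / (2 * (σ₂ k / α + lam)) = ((k : ℝ) * (-σ₂ k)) ^ 2 := by
        rw [div_eq_iff (by positivity)]
        field_simp at e2 ⊢
        nlinarith [e2]
      rw [this, Real.sqrt_sq (by nlinarith)]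
      ring
    have := ht2den.sqrt.neg
    rw [hsqrtF] at this
    have hneg : -(‖f₀‖ / Real.sqrt (2 * lam)) = -‖f₀‖ / Real.sqrt (2 * lam) := by ring
    rw [hneg] at this
    exact this.congr' heq
  exact ⟨t1, t2, t3, t4, t5⟩
end
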